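/- arXiv:2412.07690 — 3 statements merged into one kernel-verified Lean document; each statement's English description precedes it below -/
import Mathlib

section
/- Let X be a separable Banach space, (xₙ) ⊂ X with ∑ cₙ‖xₙ‖ < ∞ for positive reals cₙ, and Y the closed span of {xₙ : n ≥ 1}. If S = ∑ₙ Aₙ cₙ xₙ with (Aₙ) i.i.d. standard normal, then for every nonempty open subset O of Y, P[S ∈ O] > 0. -/
open MeasureTheory ProbabilityTheory Filter
open scoped ENNReal NNReal Topology

/-- The sigma-algebra generated by a block of the random variables. -/
def blockSigma {Ω : Type*} (A : ℕ → Ω → ℝ) (s : Set ℕ) : MeasurableSpace Ω :=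
  ⨆ i ∈ s, MeasurableSpace.comap (A i) inferInstance

lemma gaussian_open_pos {s : Set ℝ} (hs : IsOpen s) (hne : s.Nonempty) :
    0 < gaussianReal 0 1 s := by
  rw [gaussianReal_of_var_ne_zero 0 one_ne_zero,
    withDensity_apply _ hs.measurableSet]
  rw [pos_iff_ne_zero]
  intro h0
  rw [lintegral_eq_zero_iff (measurable_gaussianPDF 0 1)] at h0
  have hvol : volume s ≠ 0 := (hs.measure_pos volume hne).ne'
  have hpos : ∀ x : ℝ, ¬ gaussianPDF 0 1 x = 0 :=
    fun x => (gaussianPDF_pos 0 one_ne_zero x).ne'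
  rw [Filter.EventuallyEq, ae_iff] at h0
  simp only [Pi.zero_apply, hpos, not_false_eq_true, Set.setOf_true,
    Measure.restrict_apply MeasurableSet.univ, Set.univ_inter] at h0
  exact hvol h0

lemma gaussian_abs_moment : ∫⁻ t, ‖t‖₊ ∂(gaussianReal 0 1) < ⊤ := by
  rw [gaussianReal_of_var_ne_zero 0 one_ne_zero,
    lintegral_withDensity_eq_lintegral_mul _ (measurable_gaussianPDF 0 1)
      measurable_nnnorm.coe_nnreal_ennreal]
  have hpdf : ∀ t : ℝ, gaussianPDFReal 0 1 t
      = (Real.sqrt (2 * Real.pi))⁻¹ * Real.exp (-(2:ℝ)⁻¹ * t ^ 2) := by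
    intro t
    simp only [gaussianPDFReal, sub_zero, NNReal.coe_one, mul_one]
    congr 1
    ring_nf
  have h1 : Integrable (fun t : ℝ => |t| * Real.exp (-(2:ℝ)⁻¹ * t ^ 2)) := by
    have := (integrable_mul_exp_neg_mul_sq (by norm_num : (0:ℝ) < 2⁻¹)).abs
    simpa [abs_mul, abs_of_pos (Real.exp_pos _)] using this
  have h2 : Integrable
      (fun t : ℝ => (Real.sqrt (2 * Real.pi))⁻¹ * (|t| * Real.exp (-(2:ℝ)⁻¹ * t ^ 2))) :=
    h1.const_mul _
  have key : ∀ t : ℝ, (gaussianPDF 0 1 * fun s : ℝ => ((‖s‖₊ : ℝ≥0∞))) t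
      = ENNReal.ofReal ((Real.sqrt (2 * Real.pi))⁻¹ * (|t| * Real.exp (-(2:ℝ)⁻¹ * t ^ 2))) := by
    intro t
    simp only [Pi.mul_apply, gaussianPDF, ← enorm_eq_nnnorm, Real.enorm_eq_ofReal_abs, hpdf t]
    rw [← ENNReal.ofReal_mul (by positivity)]
    ring_nf
  simp only [key]
  exact h2.lintegral_lt_top

/-- Support theorem: the a.s. limit `S = ∑ₙ Aₙ cₙ xₙ` charges every nonempty
(relatively) open subset of the closed span `Y` of the `xₙ`. -/
theorem rand_series_full_support
    {Ω : Type*} [MeasureSpace Ω] [IsProbabilityMeasure (ℙ : Measure Ω)]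
    {X : Type*} [NormedAddCommGroup X] [NormedSpace ℝ X] [CompleteSpace X]
    [TopologicalSpace.SeparableSpace X]
    (A : ℕ → Ω → ℝ) (hmeas : ∀ n, Measurable (A n))
    (hindep : iIndepFun A ℙ)
    (hgauss : ∀ n, Measure.map (A n) ℙ = gaussianReal 0 1)
    (c : ℕ → ℝ) (hc : ∀ n, 0 < c n) (x : ℕ → X)
    (hsum : Summable fun n => c n * ‖x n‖)
    (S : Ω → X)
    (hS : ∀ᵐ ω ∂ℙ,
      Tendsto (fun N => ∑ n ∈ Finset.range N, A n ω • (c n • x n)) atTop (nhds (S ω)))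
    (Y : Set X) (hY : Y = closure (Submodule.span ℝ (Set.range x) : Set X))
    (V : Set X) (hV : IsOpen V) (hne : (V ∩ Y).Nonempty) :
    0 < ℙ {ω | S ω ∈ V ∩ Y} := by
  classical
  obtain ⟨y, hyV, hyY⟩ := hne
  obtain ⟨ε, hε, hball⟩ := Metric.isOpen_iff.mp hV y hyV
  have hyY' : y ∈ closure (Submodule.span ℝ (Set.range x) : Set X) := by
    rw [← hY]; exact hyY
  obtain ⟨z, hzmem, hzy⟩ := Metric.mem_closure_iff.mp hyY' (ε/4) (by positivity)
  rw [SetLike.mem_coe] at hzmem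
  obtain ⟨f, hf⟩ := Finsupp.mem_span_range_iff_exists_finsupp.mp hzmem
  set r : ℕ → ℝ := fun n => c n * ‖x n‖ with hr
  have hr0 : ∀ n, 0 ≤ r n := fun n => mul_nonneg (hc n).le (norm_nonneg _)
  set K : ℝ≥0∞ := ∫⁻ t, ‖t‖₊ ∂(gaussianReal 0 1) with hKdef
  have hK : K < ⊤ := gaussian_abs_moment
  set δ₂ : ℝ := (ε/8) / (K.toReal + 1) with hδ₂
  have hKpos : (0:ℝ) < K.toReal + 1 := by positivity
  have hδ₂pos : 0 < δ₂ := by positivity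
  -- choice of N : support of f in range N, and tail of the series small
  have hps : Tendsto (fun i => ∑ n ∈ Finset.range i, r n) atTop (𝓝 (∑' n, r n)) :=
    hsum.hasSum.tendsto_sum_nat
  have htt : Tendsto (fun i => ∑' k, r (k + i)) atTop (𝓝 0) := by
    have heq : ∀ i, (∑' k, r (k + i)) = (∑' n, r n) - ∑ n ∈ Finset.range i, r n := by
      intro i; rw [eq_sub_iff_add_eq, add_comm]; exact Summable.sum_add_tsum_nat_add i hsum
    simp only [heq]
    have h0 := (tendsto_const_nhds (α := ℕ) (f := atTop) (x := ∑' n, r n)).sub hps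
    simpa using h0
  have hev1 : ∀ᶠ i in atTop, (∑' k, r (k + i)) < δ₂ :=
    htt.eventually_lt_const hδ₂pos
  have hev2 : ∀ᶠ i in atTop, f.support ⊆ Finset.range i := by
    refine eventually_atTop.2 ⟨(f.support.sup id) + 1, fun i hi n hn => ?_⟩
    exact Finset.mem_range.2 (lt_of_lt_of_le (Nat.lt_succ_of_le (Finset.le_sup (f := id) hn)) hi)
  obtain ⟨N, hNtail, hNsupp⟩ := (hev1.and hev2).exists
  set a : ℕ → ℝ := fun n => f n with ha
  have hzrep : z = ∑ n ∈ Finset.range N, a n • x n := by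
    rw [← hf]
    exact (Finsupp.sum_of_support_subset f hNsupp _ (fun i _ => zero_smul ℝ (x i)))
  set δ₁ : ℝ := ε / (8 * (N + 1)) with hδ₁
  have hδ₁pos : 0 < δ₁ := by positivity
  set d : ℝ≥0∞ := ENNReal.ofReal (ε/4) with hd
  -- the events
  set I : ℕ → Set ℝ := fun n => {t | |t * c n - a n| * ‖x n‖ < δ₁} with hI
  have hIopen : ∀ n, IsOpen (I n) := fun n => isOpen_lt (by fun_prop) continuous_const
  have hIne : ∀ n, (I n).Nonempty := fun n => ⟨a n / c n, by
    simp only [hI, Set.mem_setOf_eq, div_mul_cancel₀ _ (hc n).ne', sub_self, abs_zero, zero_mul]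
    exact hδ₁pos⟩
  set E1 : Set Ω := ⋂ n ∈ Finset.range N, A n ⁻¹' I n with hE1
  set T : Ω → ℝ≥0∞ :=
    fun ω => ∑' k, ENNReal.ofReal (r (N + k)) * (‖A (N + k) ω‖₊ : ℝ≥0∞) with hTdef
  set E2 : Set Ω := {ω | T ω < d} with hE2
  -- σ-algebras and independence
  have hcomap_le : ∀ i : ℕ,
      MeasurableSpace.comap (A i) inferInstance ≤ (inferInstance : MeasurableSpace Ω) :=
    fun i => (hmeas i).comap_le
  have hIndep : Indep (blockSigma A {i : ℕ | i < N}) (blockSigma A {i : ℕ | N ≤ i}) ℙ := by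
    refine indep_iSup_of_disjoint hcomap_le hindep.iIndep ?_
    rw [Set.disjoint_left]
    intro i h1 h2
    simp only [Set.mem_setOf_eq] at h1 h2
    omega
  have hM2le : blockSigma A {i : ℕ | N ≤ i} ≤ (inferInstance : MeasurableSpace Ω) :=
    iSup₂_le fun i _ => hcomap_le i
  have hA2 : ∀ k, Measurable[blockSigma A {i : ℕ | N ≤ i}] (A (N + k)) := fun k => by
    rw [blockSigma]
    rw [measurable_iff_comap_le]
    exact le_iSup₂ (f := fun (i : ℕ) (_ : i ∈ {i : ℕ | N ≤ i}) =>
      MeasurableSpace.comap (A i) inferInstance) (N + k) (Nat.le_add_right N k)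
  have hTm2 : Measurable[blockSigma A {i : ℕ | N ≤ i}] T := by
    refine Measurable.ennreal_tsum fun k => ?_
    exact Measurable.mul measurable_const
      (measurable_coe_nnreal_ennreal.comp (measurable_nnnorm.comp (hA2 k)))
  have hT : Measurable T := hTm2.mono hM2le le_rfl
  have hE1m : MeasurableSet[blockSigma A {i : ℕ | i < N}] E1 := by
    rw [hE1]
    refine Finset.measurableSet_biInter _ (fun n hn => ?_)
    have hle : MeasurableSpace.comap (A n) inferInstance ≤ blockSigma A {i : ℕ | i < N} := by
      rw [blockSigma]
      exact le_iSup₂ (f := fun (i : ℕ) (_ : i ∈ {i : ℕ | i < N}) =>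
        MeasurableSpace.comap (A i) inferInstance) n (Finset.mem_range.mp hn)
    exact hle _ ⟨I n, (hIopen n).measurableSet, rfl⟩
  have hE2m : MeasurableSet[blockSigma A {i : ℕ | N ≤ i}] E2 := measurableSet_lt hTm2 measurable_const
  -- positivity of ℙ E1
  have hE1prod : ℙ E1 = ∏ n ∈ Finset.range N, ℙ (A n ⁻¹' I n) :=
    hindep.meas_biInter (fun n _ => ⟨I n, (hIopen n).measurableSet, rfl⟩)
  have hE1pos : 0 < ℙ E1 := by
    rw [hE1prod]
    refine CanonicallyOrderedAdd.prod_pos.2 fun n _ => ?_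
    have hmap : ℙ (A n ⁻¹' I n) = gaussianReal 0 1 (I n) := by
      rw [← hgauss n, Measure.map_apply (hmeas n) (hIopen n).measurableSet]
    rw [hmap]
    exact gaussian_open_pos (hIopen n) (hIne n)
  -- the tail estimate and positivity of ℙ E2
  have hTsummable : Summable fun k => r (N + k) :=
    Summable.congr ((summable_nat_add_iff N).mpr hsum) (fun k => congrArg r (Nat.add_comm k N))
  have htail : (∑' k, r (N + k)) < δ₂ := by
    have hswap : (∑' k, r (N + k)) = ∑' k, r (k + N) :=
      tsum_congr fun k => congrArg r (Nat.add_comm N k)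
    rw [hswap]; exact hNtail
  have hTint : ∫⁻ ω, T ω ∂ℙ ≤ ENNReal.ofReal (ε/8) := by
    have h1 : ∫⁻ ω, T ω ∂ℙ = ∑' k, ENNReal.ofReal (r (N + k)) * K := by
      rw [hTdef,
        lintegral_tsum (fun k => (((hmeas (N+k)).nnnorm.coe_nnreal_ennreal).const_mul _).aemeasurable)]
      congr 1
      funext k
      rw [lintegral_const_mul _ ((hmeas (N+k)).nnnorm.coe_nnreal_ennreal)]
      congr 1
      rw [hKdef, ← hgauss (N+k), lintegral_map measurable_nnnorm.coe_nnreal_ennreal (hmeas (N+k))]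
    rw [h1, ENNReal.tsum_mul_right, ← ENNReal.ofReal_tsum_of_nonneg (fun k => hr0 _) hTsummable]
    calc ENNReal.ofReal (∑' k, r (N+k)) * K
        ≤ ENNReal.ofReal (∑' k, r (N+k)) * ENNReal.ofReal (K.toReal + 1) := by
          refine mul_le_mul_right ?_ _
          calc K = ENNReal.ofReal K.toReal := (ENNReal.ofReal_toReal hK.ne).symm
            _ ≤ _ := ENNReal.ofReal_le_ofReal (by linarith)
      _ = ENNReal.ofReal ((∑' k, r (N+k)) * (K.toReal + 1)) :=
          (ENNReal.ofReal_mul (tsum_nonneg fun k => hr0 _)).symm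
      _ ≤ ENNReal.ofReal (ε/8) := by
          refine ENNReal.ofReal_le_ofReal ?_
          have h := (lt_div_iff₀ hKpos).mp (by rw [← hδ₂]; exact htail)
          linarith
  have hmar := mul_meas_ge_le_lintegral (μ := ℙ) hT d
  have hlt8 : ENNReal.ofReal (ε/8) < d := by
    rw [hd]
    exact (ENNReal.ofReal_lt_ofReal_iff (by positivity)).2 (by linarith)
  have hplt : ℙ {ω | d ≤ T ω} < 1 := by
    by_contra h
    push_neg at h
    have hcon : d ≤ ENNReal.ofReal (ε/8) := by
      calc d = d * 1 := (mul_one d).symm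
        _ ≤ d * ℙ {ω | d ≤ T ω} := by gcongr
        _ ≤ ∫⁻ ω, T ω ∂ℙ := hmar
        _ ≤ _ := hTint
    exact absurd hcon (not_le.2 hlt8)
  have hE2pos : 0 < ℙ E2 := by
    have hcompl : E2 = {ω | d ≤ T ω}ᶜ := by
      ext ω; simp [hE2, not_le]
    rw [hcompl, measure_compl (measurableSet_le measurable_const hT) (measure_ne_top _ _),
      measure_univ]
    exact tsub_pos_of_lt hplt
  -- product of probabilities
  have hprod : ℙ (E1 ∩ E2) = ℙ E1 * ℙ E2 := (Indep_iff _ _ _).1 hIndep E1 E2 hE1m hE2m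
  have hpos12 : 0 < ℙ (E1 ∩ E2) := by
    rw [hprod]; exact ENNReal.mul_pos hE1pos.ne' hE2pos.ne'
  -- the good event
  set G : Set Ω := {ω |
    Tendsto (fun M => ∑ n ∈ Finset.range M, A n ω • (c n • x n)) atTop (𝓝 (S ω))} with hG
  have hGc : ℙ Gᶜ = 0 := by
    rw [hG, Set.compl_setOf]
    exact ae_iff.mp hS
  -- the inclusion
  have hsub : E1 ∩ E2 ∩ G ⊆ {ω | S ω ∈ V ∩ Y} := by
    rintro ω ⟨⟨h1, h2⟩, hg⟩
    have htend : Tendsto (fun M => ∑ n ∈ Finset.range M, A n ω • (c n • x n)) atTop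
        (𝓝 (S ω)) := hg
    set P : ℕ → X := fun M => ∑ n ∈ Finset.range M, A n ω • (c n • x n) with hP
    have hmemY : S ω ∈ Y := by
      rw [hY]
      refine mem_closure_of_tendsto htend (Filter.Eventually.of_forall fun M => ?_)
      exact SetLike.mem_coe.2 (Submodule.sum_mem _ fun n _ =>
        Submodule.smul_mem _ _ (Submodule.smul_mem _ _ (Submodule.subset_span ⟨n, rfl⟩)))
    have h1' : ∀ n ∈ Finset.range N, |A n ω * c n - a n| * ‖x n‖ < δ₁ := by
      intro n hn
      have := Set.mem_iInter₂.1 h1 n hn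
      exact this
    have hhead : ‖P N - z‖ ≤ ε/8 := by
      have hterm : ∀ n ∈ Finset.range N,
          ‖A n ω • (c n • x n) - a n • x n‖ ≤ δ₁ := by
        intro n hn
        have hsm : A n ω • (c n • x n) - a n • x n = (A n ω * c n - a n) • x n := by
          rw [smul_smul, ← sub_smul]
        rw [hsm, norm_smul, Real.norm_eq_abs]
        exact (h1' n hn).le
      have hNδ : (N : ℝ) * δ₁ ≤ ε/8 := by
        have hstep : (N:ℝ) * δ₁ ≤ ((N:ℝ)+1) * δ₁ := by
          have : (N:ℝ) ≤ (N:ℝ) + 1 := by linarith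
          exact mul_le_mul_of_nonneg_right this hδ₁pos.le
        have heq : ((N:ℝ)+1) * δ₁ = ε/8 := by
          rw [hδ₁]; field_simp
        linarith
      calc ‖P N - z‖ = ‖∑ n ∈ Finset.range N, (A n ω • (c n • x n) - a n • x n)‖ := by
            rw [hP, hzrep, Finset.sum_sub_distrib]
        _ ≤ ∑ n ∈ Finset.range N, ‖A n ω • (c n • x n) - a n • x n‖ := norm_sum_le _ _
        _ ≤ ∑ _n ∈ Finset.range N, δ₁ := Finset.sum_le_sum hterm
        _ = (N : ℝ) * δ₁ := by
            rw [Finset.sum_const, Finset.card_range, nsmul_eq_mul]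
        _ ≤ ε/8 := hNδ
    have htail2 : ∀ M, N ≤ M → ‖P M - P N‖ ≤ ε/4 := by
      intro M hM
      have hd1 : P M - P N = ∑ n ∈ Finset.Ico N M, A n ω • (c n • x n) := by
        rw [hP, Finset.sum_Ico_eq_sub _ hM]
      have hnorm : ‖∑ n ∈ Finset.Ico N M, A n ω • (c n • x n)‖
          ≤ ∑ n ∈ Finset.Ico N M, |A n ω| * r n := by
        refine (norm_sum_le _ _).trans (le_of_eq (Finset.sum_congr rfl fun n _ => ?_))
        rw [norm_smul, norm_smul, Real.norm_eq_abs, Real.norm_eq_abs, abs_of_pos (hc n), hr]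
      have hofreal : (∑ n ∈ Finset.Ico N M, |A n ω| * r n) < ε/4 := by
        have hsum_eq : (∑ n ∈ Finset.Ico N M, |A n ω| * r n)
            = ∑ k ∈ Finset.range (M - N), |A (N + k) ω| * r (N + k) :=
          Finset.sum_Ico_eq_sum_range _ _ _
        have hle : ENNReal.ofReal (∑ n ∈ Finset.Ico N M, |A n ω| * r n) < d := by
          rw [hsum_eq, ENNReal.ofReal_sum_of_nonneg
            (fun k _ => mul_nonneg (abs_nonneg _) (hr0 _))]
          refine lt_of_le_of_lt ?_ h2
          refine le_trans (le_of_eq (Finset.sum_congr rfl fun k _ => ?_)) (ENNReal.sum_le_tsum _)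
          rw [mul_comm, ENNReal.ofReal_mul (hr0 _), ← enorm_eq_nnnorm, Real.enorm_eq_ofReal_abs]
        rw [hd] at hle
        exact (ENNReal.ofReal_lt_ofReal_iff (by positivity)).1 hle
      rw [hd1]
      exact hnorm.trans hofreal.le
    have hlim : ‖S ω - P N‖ ≤ ε/4 := by
      have hten : Tendsto (fun M => ‖P M - P N‖) atTop (𝓝 ‖S ω - P N‖) :=
        (htend.sub tendsto_const_nhds).norm
      exact le_of_tendsto hten (eventually_atTop.2 ⟨N, htail2⟩)
    have hzy' : ‖z - y‖ < ε/4 := by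
      rw [← dist_eq_norm, dist_comm]
      exact hzy
    have hfinal : dist (S ω) y < ε := by
      have hdecomp : S ω - y = (S ω - P N) + (P N - z) + (z - y) := by abel
      calc dist (S ω) y = ‖S ω - y‖ := dist_eq_norm _ _
        _ = ‖(S ω - P N) + (P N - z) + (z - y)‖ := by rw [hdecomp]
        _ ≤ ‖S ω - P N‖ + ‖P N - z‖ + ‖z - y‖ := norm_add₃_le
        _ < ε := by linarith
    exact ⟨hball (Metric.mem_ball.2 hfinal), hmemY⟩
  -- putting things together
  have hchain : ℙ (E1 ∩ E2) ≤ ℙ {ω | S ω ∈ V ∩ Y} := by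
    calc ℙ (E1 ∩ E2) ≤ ℙ ((E1 ∩ E2 ∩ G) ∪ Gᶜ) := by
          refine measure_mono (fun ω hω => ?_)
          by_cases hg : ω ∈ G
          · exact Or.inl ⟨hω, hg⟩
          · exact Or.inr hg
      _ ≤ ℙ (E1 ∩ E2 ∩ G) + ℙ Gᶜ := measure_union_le _ _
      _ = ℙ (E1 ∩ E2 ∩ G) := by rw [hGc, add_zero]
      _ ≤ _ := measure_mono hsub
  exact lt_of_lt_of_le hpos12 hchain
end

section
/- Let K : ℝ^m → ℝ be a Schwartz function, r₀ ∈ (0,1). For R > 0 define K^R(z) = ∑_{k∈ℤ^m} K(Rk − z). Then for every p > m there exists C = C(p,m,K,r₀) > 0, independent of R, such that for all R > 2 and all z with |z|_∞ ≤ R·r₀, one has |K^R(z)| ≤ C·(1 + |z|_∞)^{−p}. -/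
lemma aux_int_summable {M : ℕ} (hM : 2 ≤ M) :
    Summable (fun n : ℤ => ((1 + |(n : ℝ)|) ^ M)⁻¹) := by
  have hnat : Summable (fun n : ℕ => ((1 + (n : ℝ)) ^ M)⁻¹) := by
    have h0 : Summable (fun n : ℕ => (((n : ℝ)) ^ M)⁻¹) :=
      Real.summable_nat_pow_inv.mpr (by omega)
    have := (summable_nat_add_iff 1).mpr h0
    refine this.congr fun n => ?_
    push_cast; ring_nf
  apply Summable.of_nat_of_neg
  · refine hnat.congr fun n => ?_; simp
  · refine hnat.congr fun n => ?_; simp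

lemma aux_pi_prod {f : ℤ → ℝ} (hf : Summable f) (h0 : ∀ n, 0 ≤ f n) (m : ℕ) :
    Summable (fun k : Fin m → ℤ => ∏ i, f (k i)) := by
  induction m with
  | zero => exact Summable.of_finite
  | succ n ih =>
    have h := hf.mul_of_nonneg ih h0 (fun k => Finset.prod_nonneg fun i _ => h0 _)
    have := ((Fin.consEquiv fun _ => ℤ).symm.summable_iff
      (f := fun p : ℤ × (Fin n → ℤ) => f p.1 * ∏ i, f (p.2 i))).mpr h
    refine this.congr fun k => ?_
    simp only [Function.comp, Fin.consEquiv_symm_apply, Fin.prod_univ_succ]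
    rfl

set_option maxHeartbeats 1000000 in
/-- Key estimate (ii): on the box `{|z|_∞ ≤ R r₀}` the periodization
`K^R(z) = ∑_{k∈ℤᵐ} K(Rk − z)` of a Schwartz function decays like `(1+|z|_∞)^{−p}`,
uniformly in `R > 2`.  (Here `Fin m → ℝ` carries the sup norm `‖·‖ = |·|_∞`.) -/
theorem periodization_decay
    (m : ℕ) (K : SchwartzMap (Fin m → ℝ) ℝ) (r₀ : ℝ) (hr₀ : 0 < r₀) (hr₁ : r₀ < 1)
    (p : ℝ) (hp : (m : ℝ) < p) :
    ∃ C > 0, ∀ R : ℝ, 2 < R → ∀ z : Fin m → ℝ, ‖z‖ ≤ R * r₀ →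
      |∑' k : Fin m → ℤ, K (fun i => R * (k i : ℝ) - z i)| ≤ C * (1 + ‖z‖) ^ (-p) := by
  classical
  set M : ℕ := max 2 ⌈p⌉₊ with hMdef
  set N : ℕ := (m + 1) * M with hNdef
  have hM2 : 2 ≤ M := le_max_left _ _
  have hmMN : m * M ≤ N := by simp [hNdef]; nlinarith [Nat.zero_le (m*M)]
  have hpN : p ≤ (N : ℝ) := by
    calc p ≤ (⌈p⌉₊ : ℝ) := Nat.le_ceil p
    _ ≤ (M : ℝ) := by exact_mod_cast le_max_right 2 ⌈p⌉₊
    _ ≤ (N : ℝ) := by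
        have : M ≤ N := by simp [hNdef]; nlinarith [Nat.zero_le M]
        exact_mod_cast this
  -- Schwartz decay bound
  set C₀ : ℝ :=
    2 ^ N * (Finset.Iic (N, 0)).sup (schwartzSeminormFamily ℝ (Fin m → ℝ) ℝ) K
    with hC₀def
  have hC₀nn : 0 ≤ C₀ := by
    have := apply_nonneg ((Finset.Iic (N, 0)).sup (schwartzSeminormFamily ℝ (Fin m → ℝ) ℝ)) K
    positivity
  have hK : ∀ x : Fin m → ℝ, (1 + ‖x‖) ^ N * ‖K x‖ ≤ C₀ := by
    intro x
    have := SchwartzMap.one_add_le_sup_seminorm_apply (𝕜 := ℝ) (m := (N, 0))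
      le_rfl le_rfl K x
    simp [norm_iteratedFDeriv_zero] at this
    exact this
  -- geometric constant
  set c : ℝ := (1 - r₀) / 2 with hcdef
  have hc0 : 0 < c := by simp [hcdef]; linarith
  have hc1 : c ≤ 1 := by simp [hcdef]; linarith
  -- τ
  set τ : (Fin m → ℤ) → ℝ := fun k => max ‖(fun i => (k i : ℝ))‖ 1 with hτdef
  have hτ1 : ∀ k, 1 ≤ τ k := fun k => le_max_right _ _
  have hτpos : ∀ k, 0 < τ k := fun k => lt_of_lt_of_le one_pos (hτ1 k)
  have hcoord : ∀ (k : Fin m → ℤ) (i : Fin m), |(k i : ℝ)| ≤ τ k := by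
    intro k i
    refine le_trans ?_ (le_max_left _ _)
    simpa [Real.norm_eq_abs] using norm_le_pi_norm (fun j => ((k j : ℝ))) i
  -- summability of τ ^ (-N)
  have hsum_tau : Summable (fun k : Fin m → ℤ => ((τ k) ^ N)⁻¹) := by
    have hf := aux_int_summable hM2
    have h0 : ∀ n : ℤ, 0 ≤ ((1 + |(n : ℝ)|) ^ M)⁻¹ := fun n => by positivity
    have hprod := (aux_pi_prod hf h0 m).mul_left ((2 : ℝ) ^ (m * M))
    refine Summable.of_nonneg_of_le (fun k => by positivity) (fun k => ?_) hprod
    have hPpos : 0 < ∏ i, (1 + |(k i : ℝ)|) ^ M :=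
      Finset.prod_pos fun i _ => by positivity
    have hchain : ∏ i, (1 + |(k i : ℝ)|) ^ M ≤ 2 ^ (m * M) * (τ k) ^ N := by
      have h1 : ∏ i, (1 + |(k i : ℝ)|) ^ M ≤ ∏ _i : Fin m, (2 * τ k) ^ M := by
        refine Finset.prod_le_prod (fun i _ => by positivity) (fun i _ => ?_)
        refine pow_le_pow_left₀ (by positivity) ?_ M
        have := hcoord k i
        have := hτ1 k
        linarith
      have h2 : ∏ _i : Fin m, (2 * τ k) ^ M = (2 * τ k) ^ (m * M) := by
        rw [Finset.prod_const, ← pow_mul]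
        simp [mul_comm]
      have h3 : (2 * τ k) ^ (m * M) = 2 ^ (m * M) * (τ k) ^ (m * M) := mul_pow 2 (τ k) (m * M)
      have h4 : (τ k) ^ (m * M) ≤ (τ k) ^ N := pow_le_pow_right₀ (hτ1 k) hmMN
      calc ∏ i, (1 + |(k i : ℝ)|) ^ M ≤ (2 * τ k) ^ (m * M) := h2 ▸ h1
      _ = 2 ^ (m * M) * (τ k) ^ (m * M) := h3
      _ ≤ 2 ^ (m * M) * (τ k) ^ N := by
          have : (0:ℝ) < 2 ^ (m * M) := by positivity
          nlinarith
    rw [Finset.prod_inv_distrib, ← one_div, ← div_eq_mul_inv,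
      div_le_div_iff₀ (pow_pos (hτpos k) N) hPpos]
    linarith
  set S : ℝ := ∑' k : Fin m → ℤ, ((τ k) ^ N)⁻¹ with hSdef
  have hS0 : 0 ≤ S := tsum_nonneg fun k => by positivity
  refine ⟨(C₀ / c ^ N) * S + 1, by positivity, ?_⟩
  intro R hR z hz
  set a : ℝ := ‖z‖ with hadef
  have ha0 : 0 ≤ a := norm_nonneg z
  -- lower bound on 1 + ‖Rk - z‖
  have hlow : ∀ k : Fin m → ℤ,
      c * τ k * (1 + a) ≤ 1 + ‖(fun i => R * (k i : ℝ) - z i)‖ := by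
    intro k
    by_cases hk : k = 0
    · subst hk
      have hw : (fun i => R * ((0 : Fin m → ℤ) i : ℝ) - z i) = -z := by
        funext i; simp
      have hz0 : (fun i => (((0 : Fin m → ℤ)) i : ℝ)) = (0 : Fin m → ℝ) := by
        funext i; simp
      have hτ0 : τ 0 = 1 := by
        show max ‖(fun i => (((0 : Fin m → ℤ)) i : ℝ))‖ 1 = 1
        rw [hz0, norm_zero]
        exact max_eq_right zero_le_one
      rw [hw, hτ0, norm_neg, ← hadef]
      nlinarith
    · obtain ⟨i, hi⟩ := Function.ne_iff.mp hk
      set t : ℝ := ‖(fun i => (k i : ℝ))‖ with htdef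
      have ht1 : 1 ≤ t := by
        have h1 : (1 : ℝ) ≤ |(k i : ℝ)| := by
          have := Int.one_le_abs (by simpa using hi)
          exact_mod_cast this
        refine le_trans h1 ?_
        simpa [Real.norm_eq_abs] using norm_le_pi_norm (fun j => ((k j : ℝ))) i
      have hτk : τ k = t := max_eq_left ht1
      have hlb : R * t - a ≤ ‖(fun i => R * (k i : ℝ) - z i)‖ := by
        have hw : (fun i => R * (k i : ℝ) - z i) = R • (fun i => (k i : ℝ)) - z := by
          funext i; simp [Pi.smul_apply, smul_eq_mul]
        rw [hw]
        have h1 : ‖R • (fun i => (k i : ℝ))‖ - ‖z‖ ≤ ‖R • (fun i => (k i : ℝ)) - z‖ :=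
          norm_sub_norm_le _ _
        have h2 : ‖R • (fun i => (k i : ℝ))‖ = R * t := by
          rw [norm_smul, Real.norm_eq_abs, abs_of_pos (by linarith : (0:ℝ) < R), htdef]
        rw [h2] at h1
        exact h1
      have h1 : (1 - r₀) * t ≤ R * t - a := by
        nlinarith [mul_nonneg (by linarith : (0:ℝ) ≤ R - 2) (by linarith : (0:ℝ) ≤ t - r₀),
          mul_nonneg (by linarith : (0:ℝ) ≤ 1 + r₀) (by linarith : (0:ℝ) ≤ t - 1)]
      have h2 : (1 - r₀) * t * a ≤ R * t - a := by
        have hat : a * t ≤ R * r₀ * t := mul_le_mul_of_nonneg_right hz (by linarith)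
        have key : r₀ * ((1 - r₀) * t * a) ≤ r₀ * (R * t - a) := by
          nlinarith [mul_nonneg (mul_nonneg ha0 (by linarith : (0:ℝ) ≤ 1 - r₀))
              (by linarith : (0:ℝ) ≤ t - 1),
            mul_nonneg (mul_nonneg ha0 hr₀.le) (by linarith : (0:ℝ) ≤ t - 1),
            mul_nonneg ha0 (by linarith : (0:ℝ) ≤ t - r₀)]
        exact le_of_mul_le_mul_left key hr₀
      rw [hτk]
      have : c * t * (1 + a) = ((1 - r₀) * t + (1 - r₀) * t * a) / 2 := by
        rw [hcdef]; ring
      rw [this]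
      linarith
  -- pointwise bound
  have hpt : ∀ k : Fin m → ℤ, ‖K (fun i => R * (k i : ℝ) - z i)‖ ≤
      (C₀ / c ^ N) * (((τ k) ^ N)⁻¹ * ((1 + a) ^ N)⁻¹) := by
    intro k
    set w : Fin m → ℝ := fun i => R * (k i : ℝ) - z i with hwdef
    have hbase : 0 < c * τ k * (1 + a) :=
      mul_pos (mul_pos hc0 (hτpos k)) (by linarith)
    have h3 : (c * τ k * (1 + a)) ^ N ≤ (1 + ‖w‖) ^ N :=
      pow_le_pow_left₀ hbase.le (hlow k) N
    have h4 : ‖K w‖ * (c * τ k * (1 + a)) ^ N ≤ C₀ := by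
      calc ‖K w‖ * (c * τ k * (1 + a)) ^ N ≤ ‖K w‖ * (1 + ‖w‖) ^ N :=
            mul_le_mul_of_nonneg_left h3 (norm_nonneg _)
      _ = (1 + ‖w‖) ^ N * ‖K w‖ := mul_comm _ _
      _ ≤ C₀ := hK w
    have h5 : ‖K w‖ ≤ C₀ / (c * τ k * (1 + a)) ^ N :=
      (le_div_iff₀ (pow_pos hbase N)).mpr h4
    have heq : C₀ / (c * τ k * (1 + a)) ^ N =
        (C₀ / c ^ N) * (((τ k) ^ N)⁻¹ * ((1 + a) ^ N)⁻¹) := by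
      rw [mul_pow, mul_pow, div_eq_mul_inv, div_eq_mul_inv, mul_inv, mul_inv]
      ring
    rw [heq] at h5
    exact h5
  -- summing up
  have hg : Summable (fun k : Fin m → ℤ =>
      (C₀ / c ^ N) * (((τ k) ^ N)⁻¹ * ((1 + a) ^ N)⁻¹)) :=
    ((hsum_tau.mul_right ((1 + a) ^ N)⁻¹).mul_left _)
  have hnormsum : Summable (fun k : Fin m → ℤ => ‖K (fun i => R * (k i : ℝ) - z i)‖) :=
    Summable.of_nonneg_of_le (fun k => norm_nonneg _) hpt hg
  have habs : |∑' k : Fin m → ℤ, K (fun i => R * (k i : ℝ) - z i)| ≤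
      ∑' k : Fin m → ℤ, ‖K (fun i => R * (k i : ℝ) - z i)‖ := by
    simpa [Real.norm_eq_abs] using norm_tsum_le_tsum_norm hnormsum
  have hsum_le : ∑' k : Fin m → ℤ, ‖K (fun i => R * (k i : ℝ) - z i)‖ ≤
      (C₀ / c ^ N) * (S * ((1 + a) ^ N)⁻¹) := by
    have h1 := hnormsum.tsum_le_tsum hpt hg
    have h2 : ∑' k : Fin m → ℤ, (C₀ / c ^ N) * (((τ k) ^ N)⁻¹ * ((1 + a) ^ N)⁻¹) =
        (C₀ / c ^ N) * (S * ((1 + a) ^ N)⁻¹) := by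
      rw [tsum_mul_left, tsum_mul_right, hSdef]
    rw [h2] at h1
    exact h1
  have hrpow : ((1 + a) ^ N)⁻¹ ≤ (1 + a) ^ (-p) := by
    have h1a : (1 : ℝ) ≤ 1 + a := by linarith
    have : ((1 + a) ^ N)⁻¹ = (1 + a) ^ (-(N : ℝ)) := by
      rw [← Real.rpow_natCast (1 + a) N, ← Real.rpow_neg (by linarith)]
    rw [this]
    exact Real.rpow_le_rpow_of_exponent_le h1a (by linarith)
  have hpow_nn : (0:ℝ) ≤ ((1 + a) ^ N)⁻¹ := by positivity
  calc |∑' k : Fin m → ℤ, K (fun i => R * (k i : ℝ) - z i)| ≤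
      (C₀ / c ^ N) * (S * ((1 + a) ^ N)⁻¹) := le_trans habs hsum_le
  _ = ((C₀ / c ^ N) * S) * ((1 + a) ^ N)⁻¹ := by ring
  _ ≤ ((C₀ / c ^ N) * S + 1) * ((1 + a) ^ N)⁻¹ := by
      have : (0:ℝ) ≤ (C₀ / c ^ N) * S := by positivity
      nlinarith
  _ ≤ ((C₀ / c ^ N) * S + 1) * (1 + a) ^ (-p) := by
      have hCp : (0:ℝ) ≤ (C₀ / c ^ N) * S + 1 := by positivity
      exact mul_le_mul_of_nonneg_left hrpow hCp
end

section
/- Let V be an m-dimensional real Euclidean space and f : V → ℝ a locally Lipschitz function homogeneous of degree k ≥ 1. Fix A₀ positive semidefinite with A₀^{1/2} ≥ μ₀·Id, μ₀ > 0, and R ≥ ‖A₀‖. Then there exists C = C(f,R,μ₀) > 0 such that for all positive semidefinite A with ‖A‖ ≤ R, |∫_V f dΓ_{A₀} − ∫_V f dΓ_A| ≤ C·‖A − A₀‖^{1/2}, where Γ_A denotes the centered Gaussian measure with covariance A. -/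
open MeasureTheory ProbabilityTheory Matrix
open scoped RealInnerProductSpace

/-- The positive semidefinite square root of a positive semidefinite matrix
(removed from Mathlib; restored with its former definition). -/
noncomputable def Matrix.PosSemidef.sqrt {n : Type*} [Fintype n] [DecidableEq n]
    {A : Matrix n n ℝ} (hA : A.PosSemidef) : Matrix n n ℝ :=
  hA.1.eigenvectorUnitary.1 * diagonal ((↑) ∘ (√·) ∘ hA.1.eigenvalues) *
  (star hA.1.eigenvectorUnitary : Matrix n n ℝ)

/-- Frobenius norm on square real matrices. -/
noncomputable def frobNorm {m : ℕ} (X : Matrix (Fin m) (Fin m) ℝ) : ℝ :=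
  Real.sqrt ((X * X).trace)

/-- The standard Gaussian measure on `ℝᵐ`. -/
noncomputable def stdGaussianPi (m : ℕ) : Measure (Fin m → ℝ) :=
  Measure.pi fun _ : Fin m => ProbabilityTheory.gaussianReal 0 1

/-- The centered Gaussian measure on `ℝᵐ` with covariance (operator) `A ⪰ 0`,
realized as the pushforward of the standard Gaussian by `A^{1/2}`. -/
noncomputable def gaussianWithCov {m : ℕ} {A : Matrix (Fin m) (Fin m) ℝ}
    (hA : A.PosSemidef) : Measure (Fin m → ℝ) :=
  (stdGaussianPi m).map hA.sqrt.mulVec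

lemma Matrix.PosSemidef.posSemidef_sqrt {n : Type*} [Fintype n] [DecidableEq n]
    {A : Matrix n n ℝ} (hA : A.PosSemidef) : hA.sqrt.PosSemidef := by
  unfold Matrix.PosSemidef.sqrt
  exact (posSemidef_diagonal_iff.mpr fun i => Real.sqrt_nonneg _).mul_mul_conjTranspose_same _

lemma Matrix.PosSemidef.sqrt_mul_self {n : Type*} [Fintype n] [DecidableEq n]
    {A : Matrix n n ℝ} (hA : A.PosSemidef) : hA.sqrt * hA.sqrt = A := by
  unfold Matrix.PosSemidef.sqrt
  conv_rhs => rw [hA.1.spectral_theorem, Unitary.conjStarAlgAut_apply]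
  have hU : (star hA.1.eigenvectorUnitary : Matrix n n ℝ) * hA.1.eigenvectorUnitary.1 = 1 :=
    Unitary.coe_star_mul_self _
  have hD : diagonal ((↑) ∘ (√·) ∘ hA.1.eigenvalues : n → ℝ) *
      diagonal ((↑) ∘ (√·) ∘ hA.1.eigenvalues) = diagonal (RCLike.ofReal ∘ hA.1.eigenvalues) := by
    rw [diagonal_mul_diagonal]
    congr 1
    funext i
    simp [Real.mul_self_sqrt (hA.eigenvalues_nonneg i)]
  calc _ = hA.1.eigenvectorUnitary.1 * (diagonal ((↑) ∘ (√·) ∘ hA.1.eigenvalues : n → ℝ) *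
      ((star hA.1.eigenvectorUnitary : Matrix n n ℝ) * hA.1.eigenvectorUnitary.1) *
      diagonal ((↑) ∘ (√·) ∘ hA.1.eigenvalues)) * (star hA.1.eigenvectorUnitary : Matrix n n ℝ) := by
        simp only [Matrix.mul_assoc]
    _ = _ := by rw [hU, Matrix.mul_one, hD]

noncomputable def toE {m : ℕ} (X : Matrix (Fin m) (Fin m) ℝ) :
    EuclideanSpace ℝ (Fin m × Fin m) := WithLp.toLp 2 (fun p => X p.1 p.2)

lemma toE_sub {m : ℕ} (X Y : Matrix (Fin m) (Fin m) ℝ) : toE (X - Y) = toE X - toE Y := rfl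

lemma norm_toE {m : ℕ} (X : Matrix (Fin m) (Fin m) ℝ) :
    ‖toE X‖ = Real.sqrt (∑ i, ∑ j, X i j ^ 2) := by
  rw [EuclideanSpace.norm_eq]
  congr 1
  rw [show ∑ p : Fin m × Fin m, ‖toE X p‖ ^ 2 = ∑ p : Fin m × Fin m, X p.1 p.2 ^ 2 from by
    simp [toE, sq_abs], Fintype.sum_prod_type]

lemma inner_toE {m : ℕ} (X Y : Matrix (Fin m) (Fin m) ℝ) :
    ⟪toE X, toE Y⟫ = ∑ i, ∑ j, X i j * Y i j := by
  rw [PiLp.inner_apply, show ∑ p : Fin m × Fin m, ⟪toE X p, toE Y p⟫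
    = ∑ p : Fin m × Fin m, X p.1 p.2 * Y p.1 p.2 from by simp [toE, mul_comm],
    Fintype.sum_prod_type]

lemma trace_mul_symm {m : ℕ} (X Y : Matrix (Fin m) (Fin m) ℝ) (hY : Yᵀ = Y) :
    (X * Y).trace = ⟪toE X, toE Y⟫ := by
  rw [inner_toE, Matrix.trace, Fintype.sum_congr]
  intro i
  rw [Matrix.diag_apply, Matrix.mul_apply]
  congr 1
  ext j
  rw [show Y j i = Y i j from by conv_lhs => rw [← hY, Matrix.transpose_apply]]

lemma frob_eq_norm_toE {m : ℕ} (X : Matrix (Fin m) (Fin m) ℝ) (hX : Xᵀ = X) :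
    frobNorm X = ‖toE X‖ := by
  rw [frobNorm, trace_mul_symm X X hX, real_inner_self_eq_norm_sq, Real.sqrt_sq (norm_nonneg _)]

lemma sum_abs_le {m : ℕ} (X : Matrix (Fin m) (Fin m) ℝ) :
    ∑ i, ∑ j, |X i j| ≤ (m : ℝ) * ‖toE X‖ := by
  have h := real_inner_le_norm (toE (Matrix.of fun i j => |X i j|))
      (toE (Matrix.of fun _ _ => (1 : ℝ)))
  rw [inner_toE] at h
  simp only [Matrix.of_apply, mul_one] at h
  refine h.trans ?_
  rw [norm_toE, norm_toE]
  simp only [Matrix.of_apply, sq_abs, one_pow]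
  rw [Finset.sum_const, Finset.sum_const, Finset.card_univ, Fintype.card_fin, nsmul_eq_mul,
    nsmul_eq_mul, ← norm_toE, mul_comm]
  gcongr
  rw [show ((m : ℝ) * ((m : ℝ) * 1) : ℝ) = (m : ℝ) ^ 2 by ring,
    Real.sqrt_sq (Nat.cast_nonneg m)]

lemma mulVec_norm_le {m : ℕ} (X : Matrix (Fin m) (Fin m) ℝ) (v : Fin m → ℝ) :
    ‖X.mulVec v‖ ≤ (m : ℝ) * ‖toE X‖ * ‖v‖ := by
  have hnn : (0 : ℝ) ≤ (m : ℝ) * ‖toE X‖ * ‖v‖ := by positivity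
  rw [pi_norm_le_iff_of_nonneg hnn]
  intro i
  rw [Matrix.mulVec, dotProduct]
  calc ‖∑ j, X i j * v j‖ ≤ ∑ j, ‖X i j * v j‖ := norm_sum_le _ _
    _ ≤ ∑ j, |X i j| * ‖v‖ := by
        refine Finset.sum_le_sum fun j _ => ?_
        rw [norm_mul]
        exact mul_le_mul_of_nonneg_left (norm_le_pi_norm v j) (abs_nonneg _)
    _ = (∑ j, |X i j|) * ‖v‖ := by rw [Finset.sum_mul]
    _ ≤ ((m : ℝ) * ‖toE X‖) * ‖v‖ := by
        refine mul_le_mul_of_nonneg_right ?_ (norm_nonneg _)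
        calc ∑ j, |X i j| ≤ ∑ i', ∑ j, |X i' j| :=
              Finset.single_le_sum (f := fun i' => ∑ j, |X i' j|)
                (fun _ _ => Finset.sum_nonneg fun _ _ => abs_nonneg _) (Finset.mem_univ i)
          _ ≤ (m : ℝ) * ‖toE X‖ := sum_abs_le X

lemma psd_trace_nonneg {m : ℕ} {M : Matrix (Fin m) (Fin m) ℝ} (hM : M.PosSemidef) :
    0 ≤ M.trace := by
  exact hM.trace_nonneg

lemma symm_of_psd {m : ℕ} {M : Matrix (Fin m) (Fin m) ℝ} (hM : M.PosSemidef) : Mᵀ = M := by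
  have h := hM.1
  rw [Matrix.IsHermitian] at h
  ext i j
  rw [Matrix.transpose_apply]
  conv_rhs => rw [← h]
  simp [Matrix.conjTranspose_apply]

lemma sqrt_diff_le {m : ℕ} {A₀ A : Matrix (Fin m) (Fin m) ℝ}
    (hA₀ : A₀.PosSemidef) (hA : A.PosSemidef) {μ₀ : ℝ} (hμ₀ : 0 < μ₀)
    (hlb : (hA₀.sqrt - μ₀ • (1 : Matrix (Fin m) (Fin m) ℝ)).PosSemidef) :
    μ₀ * ‖toE (hA₀.sqrt - hA.sqrt)‖ ≤ ‖toE (A₀ - A)‖ := by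
  set S₀ := hA₀.sqrt with hS₀def
  set S := hA.sqrt with hSdef
  set D := S₀ - S with hDdef
  have hS₀ : S₀.PosSemidef := hA₀.posSemidef_sqrt
  have hS : S.PosSemidef := hA.posSemidef_sqrt
  have hDsymm : Dᵀ = D := by
    rw [hDdef, Matrix.transpose_sub, symm_of_psd hS₀, symm_of_psd hS]
  have hDH : Dᴴ = D := by
    rw [show Dᴴ = Dᵀ from by ext i j; simp [Matrix.conjTranspose_apply], hDsymm]
  have hdecomp : A₀ - A = S₀ * D + D * S := by
    rw [hDdef, Matrix.mul_sub, Matrix.sub_mul, hA₀.sqrt_mul_self, hA.sqrt_mul_self]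
    abel
  have h2 : 0 ≤ (D * S * D).trace := by
    have := hS.conjTranspose_mul_mul_same D
    rw [hDH] at this
    exact psd_trace_nonneg this
  have h4 : 0 ≤ ((S₀ - μ₀ • (1 : Matrix (Fin m) (Fin m) ℝ)) * D * D).trace := by
    rw [Matrix.trace_mul_cycle]
    have := hlb.conjTranspose_mul_mul_same D
    rw [hDH] at this
    exact psd_trace_nonneg this
  have h5 : (D * D).trace = ‖toE D‖ ^ 2 := by
    rw [trace_mul_symm D D hDsymm, real_inner_self_eq_norm_sq]
  have h3 : μ₀ * ‖toE D‖ ^ 2 ≤ (S₀ * D * D).trace := by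
    have hexp : S₀ * D * D
        = (S₀ - μ₀ • (1 : Matrix (Fin m) (Fin m) ℝ)) * D * D + μ₀ • (D * D) := by
      rw [Matrix.sub_mul, Matrix.sub_mul]
      rw [Matrix.smul_mul, Matrix.smul_mul, Matrix.one_mul]
      abel
    rw [hexp, Matrix.trace_add, Matrix.trace_smul, h5, smul_eq_mul]
    linarith
  have hkey : μ₀ * ‖toE D‖ ^ 2 ≤ ‖toE (A₀ - A)‖ * ‖toE D‖ := by
    have htr : ((A₀ - A) * D).trace = (S₀ * D * D).trace + (D * S * D).trace := by
      rw [hdecomp, Matrix.add_mul, Matrix.trace_add, Matrix.mul_assoc S₀ D D,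
        ← Matrix.mul_assoc S₀ D D]
    have hCS : ((A₀ - A) * D).trace ≤ ‖toE (A₀ - A)‖ * ‖toE D‖ := by
      rw [trace_mul_symm _ D hDsymm]
      exact real_inner_le_norm _ _
    linarith
  rcases eq_or_lt_of_le (norm_nonneg (toE D)) with h0 | h0
  · rw [← h0, mul_zero]
    exact norm_nonneg _
  · nlinarith [hkey, h0]

lemma unif_lip {α β : Type*} [MetricSpace α] [MetricSpace β] {f : α → β}
    (hf : LocallyLipschitz f) {s : Set α} (hs : IsCompact s) :
    ∃ K : ℝ, 0 ≤ K ∧ ∃ δ : ℝ, 0 < δ ∧ ∀ x ∈ s, ∀ y z,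
      dist y x ≤ δ → dist z x ≤ δ → dist (f y) (f z) ≤ K * dist y z := by
  choose K t ht hlip using hf
  have hball : ∀ x : α, ∃ r : ℝ, 0 < r ∧ Metric.ball x (3 * r) ⊆ t x := by
    intro x
    rcases Metric.mem_nhds_iff.mp (ht x) with ⟨ε, hε, hsub⟩
    refine ⟨ε / 3, by linarith, fun y hy => hsub ?_⟩
    rw [Metric.mem_ball] at hy ⊢
    linarith
  choose r hr hrball using hball
  obtain ⟨T, hTs, hTcover⟩ := hs.elim_nhds_subcover (fun x => Metric.ball x (r x))
    (fun x _ => Metric.ball_mem_nhds x (hr x))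
  rcases T.eq_empty_or_nonempty with rfl | hT
  · refine ⟨0, le_refl _, 1, one_pos, fun x hx => ?_⟩
    exact absurd (hTcover hx) (by simp)
  refine ⟨T.sup' hT fun x => (K x : ℝ), ?_, T.inf' hT r, ?_, ?_⟩
  · obtain ⟨x, hx⟩ := hT
    exact le_trans (K x).coe_nonneg (Finset.le_sup' (fun x => (K x : ℝ)) hx)
  · rw [Finset.lt_inf'_iff]
    exact fun x _ => hr x
  · intro x hx y z hy hz
    have hxU := hTcover hx
    rw [Set.mem_iUnion₂] at hxU
    obtain ⟨x₀, hx₀T, hxball⟩ := hxU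
    have hδ : T.inf' hT r ≤ r x₀ := Finset.inf'_le _ hx₀T
    rw [Metric.mem_ball] at hxball
    have hyt : y ∈ t x₀ := hrball x₀ (by
      rw [Metric.mem_ball]
      calc dist y x₀ ≤ dist y x + dist x x₀ := dist_triangle _ _ _
        _ < 3 * r x₀ := by linarith [hr x₀, hδ, hy])
    have hzt : z ∈ t x₀ := hrball x₀ (by
      rw [Metric.mem_ball]
      calc dist z x₀ ≤ dist z x + dist x x₀ := dist_triangle _ _ _
        _ < 3 * r x₀ := by linarith [hr x₀, hδ, hz])
    calc dist (f y) (f z) ≤ (K x₀ : ℝ) * dist y z := (hlip x₀).dist_le_mul y hyt z hzt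
      _ ≤ (T.sup' hT fun x => (K x : ℝ)) * dist y z :=
          mul_le_mul_of_nonneg_right (Finset.le_sup' (fun x => (K x : ℝ)) hx₀T) dist_nonneg

instance (m : ℕ) : IsProbabilityMeasure (stdGaussianPi m) := by
  unfold stdGaussianPi; infer_instance

lemma map_eval_stdGaussian {m : ℕ} (i : Fin m) :
    (stdGaussianPi m).map (fun v => v i) = gaussianReal 0 1 := by
  refine Measure.ext fun s hs => ?_
  rw [Measure.map_apply (measurable_pi_apply i) hs]
  have hpre : (fun v : Fin m → ℝ => v i) ⁻¹' s
      = Set.pi Set.univ (Function.update (fun _ => Set.univ) i s) := Set.eval_preimage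
  rw [hpre, stdGaussianPi, Measure.pi_pi]
  rw [Finset.prod_eq_single i]
  · rw [Function.update_self]
  · intro j _ hj
    rw [Function.update_of_ne hj]
    simp
  · simp

lemma abs_pow_le_exp (k : ℕ) (x : ℝ) :
    |x| ^ k * Real.exp (-(x ^ 2) / 2) ≤ (k.factorial : ℝ) * Real.exp 1 * Real.exp (-(1/4) * x ^ 2) := by
  have h1 : |x| ^ k ≤ (k.factorial : ℝ) * Real.exp |x| := by
    have := Real.pow_div_factorial_le_exp (x := |x|) (abs_nonneg x) k
    have hk : (0 : ℝ) < (k.factorial : ℝ) := by exact_mod_cast k.factorial_pos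
    rw [div_le_iff₀ hk] at this
    linarith [this]
  have h2 : Real.exp |x| * Real.exp (-(x ^ 2) / 2)
      ≤ Real.exp 1 * Real.exp (-(1/4) * x ^ 2) := by
    rw [← Real.exp_add, ← Real.exp_add]
    apply Real.exp_le_exp.mpr
    nlinarith [sq_nonneg (|x| - 2), sq_abs x]
  calc |x| ^ k * Real.exp (-(x ^ 2) / 2)
      ≤ ((k.factorial : ℝ) * Real.exp |x|) * Real.exp (-(x ^ 2) / 2) :=
        mul_le_mul_of_nonneg_right h1 (Real.exp_nonneg _)
    _ = (k.factorial : ℝ) * (Real.exp |x| * Real.exp (-(x ^ 2) / 2)) := by ring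
    _ ≤ (k.factorial : ℝ) * (Real.exp 1 * Real.exp (-(1/4) * x ^ 2)) :=
        mul_le_mul_of_nonneg_left h2 (Nat.cast_nonneg _)
    _ = (k.factorial : ℝ) * Real.exp 1 * Real.exp (-(1/4) * x ^ 2) := by ring

lemma integrable_abs_pow_gaussian (k : ℕ) :
    Integrable (fun x : ℝ => |x| ^ k) (gaussianReal 0 1) := by
  rw [gaussianReal_of_var_ne_zero 0 one_ne_zero]
  rw [integrable_withDensity_iff (measurable_gaussianPDF 0 1)
    (Filter.Eventually.of_forall fun x => ENNReal.ofReal_lt_top)]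
  have heq : ∀ x : ℝ, (gaussianPDF 0 1 x).toReal = gaussianPDFReal 0 1 x := by
    intro x
    rw [gaussianPDF]
    exact ENNReal.toReal_ofReal (gaussianPDFReal_nonneg 0 1 x)
  have hmeas : AEStronglyMeasurable (fun x : ℝ => |x| ^ k * (gaussianPDF 0 1 x).toReal) volume := by
    apply Continuous.aestronglyMeasurable
    have : Continuous fun x : ℝ => (gaussianPDF 0 1 x).toReal := by
      simp_rw [heq, gaussianPDFReal]
      continuity
    exact ((continuous_abs.pow k).mul this)
  set c := ((k.factorial : ℝ) * Real.exp 1) * (Real.sqrt (2 * Real.pi * 1))⁻¹ with hc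
  refine Integrable.mono ((integrable_exp_neg_mul_sq (by norm_num : (0:ℝ) < 1/4)).const_mul c)
    hmeas ?_
  refine Filter.Eventually.of_forall fun x => ?_
  have hxk : ‖|x| ^ k * (gaussianPDF 0 1 x).toReal‖ = |x| ^ k * (gaussianPDF 0 1 x).toReal := by
    rw [Real.norm_eq_abs, abs_of_nonneg]
    exact mul_nonneg (pow_nonneg (abs_nonneg x) k) ENNReal.toReal_nonneg
  rw [hxk, heq, gaussianPDFReal]
  refine le_trans ?_ (le_abs_self _)
  have hpdf : (0:ℝ) ≤ (Real.sqrt (2 * Real.pi * ((1:NNReal):ℝ)))⁻¹ := by positivity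
  have habs := abs_pow_le_exp k x
  calc |x| ^ k * ((Real.sqrt (2 * Real.pi * ((1:NNReal):ℝ)))⁻¹
        * Real.exp (-(x - 0) ^ 2 / (2 * ((1:NNReal):ℝ))))
      = (Real.sqrt (2 * Real.pi * ((1:NNReal):ℝ)))⁻¹
        * (|x| ^ k * Real.exp (-(x ^ 2) / 2)) := by
        rw [sub_zero, NNReal.coe_one]; ring_nf
    _ ≤ (Real.sqrt (2 * Real.pi * ((1:NNReal):ℝ)))⁻¹
        * ((k.factorial : ℝ) * Real.exp 1 * Real.exp (-(1/4) * x ^ 2)) :=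
        mul_le_mul_of_nonneg_left habs hpdf
    _ = c * Real.exp (-(1/4) * x ^ 2) := by rw [hc, NNReal.coe_one]; ring

lemma continuous_mulVec {m : ℕ} (S : Matrix (Fin m) (Fin m) ℝ) :
    Continuous fun v : Fin m → ℝ => S.mulVec v := by
  apply continuous_pi
  intro i
  simp only [Matrix.mulVec, dotProduct]
  exact continuous_finset_sum _ fun j _ => continuous_const.mul (continuous_apply j)

lemma integral_gaussianWithCov {m : ℕ} {A : Matrix (Fin m) (Fin m) ℝ} (hA : A.PosSemidef)
    (f : (Fin m → ℝ) → ℝ) (hfc : Continuous f) :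
    ∫ v, f v ∂(gaussianWithCov hA) = ∫ v, f (hA.sqrt.mulVec v) ∂(stdGaussianPi m) := by
  rw [gaussianWithCov,
    integral_map (continuous_mulVec _).measurable.aemeasurable hfc.aestronglyMeasurable]

lemma integrable_norm_pow (m k : ℕ) :
    Integrable (fun v : Fin m → ℝ => ‖v‖ ^ k) (stdGaussianPi m) := by
  rcases Nat.eq_zero_or_pos m with rfl | hm
  · have : (fun v : Fin 0 → ℝ => ‖v‖ ^ k) = fun _ => ‖(0 : Fin 0 → ℝ)‖ ^ k := by
      funext v
      congr 2
      exact Subsingleton.elim _ _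
    rw [this]
    exact integrable_const _
  have hterm : ∀ i : Fin m, Integrable (fun v : Fin m → ℝ => |v i| ^ k) (stdGaussianPi m) := by
    intro i
    have hg : Integrable (fun x : ℝ => |x| ^ k) ((stdGaussianPi m).map (fun v => v i)) := by
      rw [map_eval_stdGaussian]
      exact integrable_abs_pow_gaussian k
    exact (integrable_map_measure ((continuous_abs.pow k).aestronglyMeasurable)
      (measurable_pi_apply i).aemeasurable).mp hg
  have hsum : Integrable (fun v : Fin m → ℝ => ∑ i, |v i| ^ k) (stdGaussianPi m) :=
    integrable_finset_sum _ fun i _ => hterm i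
  refine hsum.mono ((continuous_norm.pow k).aestronglyMeasurable)
    (Filter.Eventually.of_forall fun v => ?_)
  have hsum_nonneg : (0:ℝ) ≤ ∑ i, |v i| ^ k :=
    Finset.sum_nonneg fun i _ => pow_nonneg (abs_nonneg _) k
  rw [Real.norm_eq_abs, Real.norm_eq_abs, abs_of_nonneg (pow_nonneg (norm_nonneg v) k),
    abs_of_nonneg hsum_nonneg]
  obtain ⟨i₀, -, hmax⟩ := Finset.exists_max_image Finset.univ (fun i => |v i|)
    ⟨⟨0, hm⟩, Finset.mem_univ _⟩
  have h1 : ‖v‖ ≤ |v i₀| := by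
    rw [pi_norm_le_iff_of_nonneg (abs_nonneg _)]
    intro i
    exact hmax i (Finset.mem_univ i)
  calc ‖v‖ ^ k ≤ |v i₀| ^ k := pow_le_pow_left₀ (norm_nonneg v) h1 k
    _ ≤ ∑ i, |v i| ^ k := Finset.single_le_sum
        (f := fun i => |v i| ^ k) (fun i _ => pow_nonneg (abs_nonneg _) k) (Finset.mem_univ i₀)

lemma growth_bound {m k : ℕ} {f : (Fin m → ℝ) → ℝ} (hfc : Continuous f) (hk : 1 ≤ k)
    (hhom : ∀ t : ℝ, 0 ≤ t → ∀ v, f (t • v) = t ^ k * f v) :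
    ∃ C₀ : ℝ, 0 ≤ C₀ ∧ ∀ x, |f x| ≤ C₀ * ‖x‖ ^ k := by
  obtain ⟨C, hC⟩ := (isCompact_closedBall (0 : Fin m → ℝ) 1).exists_bound_of_continuousOn
    hfc.continuousOn
  refine ⟨max C 0, le_max_right _ _, fun x => ?_⟩
  have hf0 : f 0 = 0 := by
    have h := hhom 0 le_rfl 0
    rw [zero_smul, zero_pow (by omega), zero_mul] at h
    exact h
  rcases eq_or_lt_of_le (norm_nonneg x) with h0 | h0
  · have hx0 : x = 0 := by rw [← norm_eq_zero]; exact h0.symm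
    rw [hx0, hf0, norm_zero, zero_pow (by omega), mul_zero, abs_zero]
  · set t := ‖x‖ with ht
    have hu : f x = t ^ k * f (t⁻¹ • x) := by
      have := hhom t (le_of_lt h0) (t⁻¹ • x)
      rw [smul_smul, mul_inv_cancel₀ (ne_of_gt h0), one_smul] at this
      exact this
    have hunorm : ‖t⁻¹ • x‖ ≤ 1 := by
      rw [norm_smul, norm_inv, Real.norm_eq_abs, abs_of_pos h0, inv_mul_cancel₀ (ne_of_gt h0)]
    have hfu : |f (t⁻¹ • x)| ≤ max C 0 := by
      refine le_trans ?_ (le_max_left _ _)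
      exact hC _ (Metric.mem_closedBall.mpr (by rwa [dist_zero_right]))
    rw [hu, abs_mul, abs_pow, abs_of_pos h0, mul_comm]
    exact mul_le_mul_of_nonneg_right hfu (pow_nonneg (norm_nonneg x) k)

lemma norm_toE_one (m : ℕ) : ‖toE (1 : Matrix (Fin m) (Fin m) ℝ)‖ = Real.sqrt m := by
  rw [norm_toE]
  congr 1
  have : ∀ i : Fin m, ∑ j, ((1 : Matrix (Fin m) (Fin m) ℝ) i j) ^ 2 = 1 := by
    intro i
    rw [Finset.sum_eq_single i]
    · simp [Matrix.one_apply]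
    · intro j _ hj
      simp [Matrix.one_apply, (Ne.symm hj)]
    · simp
  rw [Finset.sum_congr rfl fun i _ => this i]
  simp

lemma sqrt_norm_bound {m : ℕ} {A : Matrix (Fin m) (Fin m) ℝ} (hA : A.PosSemidef) {R : ℝ}
    (hR : frobNorm A ≤ R) : ‖toE hA.sqrt‖ ≤ Real.sqrt (Real.sqrt m * R) := by
  have hSsymm : (hA.sqrt)ᵀ = hA.sqrt := symm_of_psd hA.posSemidef_sqrt
  have h1 : ‖toE hA.sqrt‖ ^ 2 = A.trace := by
    rw [← real_inner_self_eq_norm_sq, ← trace_mul_symm _ _ hSsymm, hA.sqrt_mul_self]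
  have hAsymm : Aᵀ = A := symm_of_psd hA
  have h2 : A.trace = ⟪toE A, toE (1 : Matrix (Fin m) (Fin m) ℝ)⟫ := by
    rw [← trace_mul_symm A 1 Matrix.transpose_one, Matrix.mul_one]
  have htr : A.trace ≤ Real.sqrt m * R := by
    calc A.trace = ⟪toE A, toE (1 : Matrix (Fin m) (Fin m) ℝ)⟫ := h2
      _ ≤ ‖toE A‖ * ‖toE (1 : Matrix (Fin m) (Fin m) ℝ)‖ := real_inner_le_norm _ _
      _ = Real.sqrt m * frobNorm A := by
          rw [norm_toE_one, frob_eq_norm_toE A hAsymm, mul_comm]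
      _ ≤ Real.sqrt m * R := mul_le_mul_of_nonneg_left hR (Real.sqrt_nonneg _)
  calc ‖toE hA.sqrt‖ = Real.sqrt (‖toE hA.sqrt‖ ^ 2) := (Real.sqrt_sq (norm_nonneg _)).symm
    _ ≤ Real.sqrt (Real.sqrt m * R) := Real.sqrt_le_sqrt (by rw [h1]; exact htr)

/-- Square-root Hölder continuity of Gaussian integrals of a homogeneous locally
Lipschitz function with respect to the covariance. -/
theorem gaussian_integral_sqrt_holder
    (m : ℕ) (f : (Fin m → ℝ) → ℝ) (hf : LocallyLipschitz f)
    (k : ℕ) (hk : 1 ≤ k) (hhom : ∀ t : ℝ, 0 ≤ t → ∀ v, f (t • v) = t ^ k * f v)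
    (A₀ : Matrix (Fin m) (Fin m) ℝ) (hA₀ : A₀.PosSemidef)
    (μ₀ : ℝ) (hμ₀ : 0 < μ₀)
    (hlb : (hA₀.sqrt - μ₀ • (1 : Matrix (Fin m) (Fin m) ℝ)).PosSemidef)
    (R : ℝ) (hR : frobNorm A₀ ≤ R) :
    ∃ C > 0, ∀ (A : Matrix (Fin m) (Fin m) ℝ) (hA : A.PosSemidef), frobNorm A ≤ R →
      |(∫ v, f v ∂(gaussianWithCov hA₀)) - ∫ v, f v ∂(gaussianWithCov hA)|
        ≤ C * Real.sqrt (frobNorm (A - A₀)) := by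
  classical
  have hfc : Continuous f := hf.continuous
  obtain ⟨C₀, hC₀, hgrow⟩ := growth_bound hfc hk hhom
  set γ := stdGaussianPi m with hγ
  set M₁ := Real.sqrt (Real.sqrt m * R) with hM₁def
  have hM₁ : 0 ≤ M₁ := Real.sqrt_nonneg _
  have hS₀bound : ‖toE hA₀.sqrt‖ ≤ M₁ := sqrt_norm_bound hA₀ hR
  obtain ⟨K, hK, δ, hδ, hlipK⟩ := unif_lip hf (isCompact_closedBall (0 : Fin m → ℝ) ((m : ℝ) * M₁))
  set Ik := ∫ v, ‖v‖ ^ k ∂γ with hIk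
  have hIknn : 0 ≤ Ik := integral_nonneg fun v => pow_nonneg (norm_nonneg v) k
  set ε₀ := δ * μ₀ / (m + 1) with hε₀def
  have hε₀pos : 0 < ε₀ := by positivity
  set C₁ := 2 * (C₀ * ((m : ℝ) * M₁) ^ k * Ik) with hC₁def
  have hC₁nn : 0 ≤ C₁ := by
    apply mul_nonneg (by norm_num)
    exact mul_nonneg (mul_nonneg hC₀ (pow_nonneg (mul_nonneg (Nat.cast_nonneg m) hM₁) k)) hIknn
  set C := K * (m : ℝ) / μ₀ * Ik * Real.sqrt ε₀ + C₁ / Real.sqrt ε₀ + 1 with hCdef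
  have ht1 : 0 ≤ K * (m : ℝ) / μ₀ * Ik * Real.sqrt ε₀ :=
    mul_nonneg (mul_nonneg (div_nonneg (mul_nonneg hK (Nat.cast_nonneg m)) hμ₀.le) hIknn)
      (Real.sqrt_nonneg _)
  have ht2 : 0 ≤ C₁ / Real.sqrt ε₀ := div_nonneg hC₁nn (Real.sqrt_nonneg _)
  refine ⟨C, by rw [hCdef]; linarith, ?_⟩
  intro A hA hRA
  set S₀ := hA₀.sqrt with hS₀def
  set S := hA.sqrt with hSdef
  have hSbound : ‖toE S‖ ≤ M₁ := sqrt_norm_bound hA hRA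
  -- integrability of the two pushed-forward integrands
  have hint : ∀ (B : Matrix (Fin m) (Fin m) ℝ), ‖toE B‖ ≤ M₁ →
      Integrable (fun v => f (B.mulVec v)) γ := by
    intro B hB
    refine Integrable.mono ((integrable_norm_pow m k).const_mul (C₀ * ((m : ℝ) * M₁) ^ k))
      (hfc.comp (continuous_mulVec B)).aestronglyMeasurable
      (Filter.Eventually.of_forall fun v => ?_)
    rw [Real.norm_eq_abs, Real.norm_eq_abs]
    have hb1 : |f (B.mulVec v)| ≤ C₀ * ‖B.mulVec v‖ ^ k := hgrow _
    have hb2 : ‖B.mulVec v‖ ^ k ≤ ((m : ℝ) * M₁) ^ k * ‖v‖ ^ k := by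
      rw [← mul_pow]
      refine pow_le_pow_left₀ (norm_nonneg _) ?_ k
      calc ‖B.mulVec v‖ ≤ (m : ℝ) * ‖toE B‖ * ‖v‖ := mulVec_norm_le B v
        _ ≤ (m : ℝ) * M₁ * ‖v‖ := by
            apply mul_le_mul_of_nonneg_right _ (norm_nonneg v)
            exact mul_le_mul_of_nonneg_left hB (Nat.cast_nonneg m)
    calc |f (B.mulVec v)| ≤ C₀ * (((m : ℝ) * M₁) ^ k * ‖v‖ ^ k) :=
          le_trans hb1 (mul_le_mul_of_nonneg_left hb2 hC₀)
      _ = C₀ * ((m : ℝ) * M₁) ^ k * ‖v‖ ^ k := by ring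
      _ ≤ |C₀ * ((m : ℝ) * M₁) ^ k * ‖v‖ ^ k| := le_abs_self _
  have hint₀ : Integrable (fun v => f (S₀.mulVec v)) γ := hint S₀ hS₀bound
  have hintA : Integrable (fun v => f (S.mulVec v)) γ := hint S hSbound
  -- pointwise growth bound used in the "far" regime
  have hptbound : ∀ (B : Matrix (Fin m) (Fin m) ℝ), ‖toE B‖ ≤ M₁ →
      |∫ v, f (B.mulVec v) ∂γ| ≤ C₀ * ((m : ℝ) * M₁) ^ k * Ik := by
    intro B hB
    calc |∫ v, f (B.mulVec v) ∂γ| ≤ ∫ v, |f (B.mulVec v)| ∂γ := by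
          rw [← Real.norm_eq_abs]
          exact le_of_le_of_eq (norm_integral_le_integral_norm _)
            (integral_congr_ae (Filter.Eventually.of_forall fun v => Real.norm_eq_abs _))
      _ ≤ ∫ v, C₀ * ((m : ℝ) * M₁) ^ k * ‖v‖ ^ k ∂γ := by
          refine integral_mono (hint B hB).abs
            ((integrable_norm_pow m k).const_mul (C₀ * ((m : ℝ) * M₁) ^ k)) fun v => ?_
          have hb1 : |f (B.mulVec v)| ≤ C₀ * ‖B.mulVec v‖ ^ k := hgrow _
          have hb2 : ‖B.mulVec v‖ ^ k ≤ ((m : ℝ) * M₁) ^ k * ‖v‖ ^ k := by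
            rw [← mul_pow]
            refine pow_le_pow_left₀ (norm_nonneg _) ?_ k
            calc ‖B.mulVec v‖ ≤ (m : ℝ) * ‖toE B‖ * ‖v‖ := mulVec_norm_le B v
              _ ≤ (m : ℝ) * M₁ * ‖v‖ := by
                  apply mul_le_mul_of_nonneg_right _ (norm_nonneg v)
                  exact mul_le_mul_of_nonneg_left hB (Nat.cast_nonneg m)
          calc |f (B.mulVec v)| ≤ C₀ * (((m : ℝ) * M₁) ^ k * ‖v‖ ^ k) :=
                le_trans hb1 (mul_le_mul_of_nonneg_left hb2 hC₀)
            _ = C₀ * ((m : ℝ) * M₁) ^ k * ‖v‖ ^ k := by ring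
      _ = C₀ * ((m : ℝ) * M₁) ^ k * Ik := integral_const_mul _ _
  -- frobNorm of the difference
  have hΔsymm : (A - A₀)ᵀ = A - A₀ := by
    rw [Matrix.transpose_sub, symm_of_psd hA, symm_of_psd hA₀]
  have hfrobΔ : frobNorm (A - A₀) = ‖toE (A - A₀)‖ := frob_eq_norm_toE _ hΔsymm
  set Δ := ‖toE (A - A₀)‖ with hΔdef
  have hΔnn : 0 ≤ Δ := norm_nonneg _
  have hnorm_rev : ‖toE (A₀ - A)‖ = Δ := by
    rw [hΔdef, toE_sub, toE_sub, norm_sub_rev]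
  have hkey : μ₀ * ‖toE (S₀ - S)‖ ≤ Δ := by
    rw [← hnorm_rev]
    exact sqrt_diff_le hA₀ hA hμ₀ hlb
  have hDnn : 0 ≤ ‖toE (S₀ - S)‖ := norm_nonneg _
  rw [integral_gaussianWithCov hA₀ f hfc, integral_gaussianWithCov hA f hfc, ← hγ, hfrobΔ, ← hS₀def, ← hSdef]
  by_cases hsmall : Δ ≤ ε₀
  · -- near regime
    have hpt : ∀ v, |f (S₀.mulVec v) - f (S.mulVec v)| ≤ (K * (m : ℝ) / μ₀ * Δ) * ‖v‖ ^ k := by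
      intro v
      rcases eq_or_lt_of_le (norm_nonneg v) with h0 | h0
      · have hv0 : v = 0 := by rw [← norm_eq_zero]; exact h0.symm
        rw [hv0, Matrix.mulVec_zero, Matrix.mulVec_zero, sub_self, abs_zero, norm_zero,
          zero_pow (by omega), mul_zero]
      · set t := ‖v‖ with htdef
        set u := t⁻¹ • v with hudef
        have hunorm : ‖u‖ = 1 := by
          rw [hudef, norm_smul, norm_inv, Real.norm_eq_abs, abs_of_pos h0, ← htdef,
            inv_mul_cancel₀ (ne_of_gt h0)]
        have htu : t • u = v := by
          rw [hudef, smul_smul, mul_inv_cancel₀ (ne_of_gt h0), one_smul]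
        have hsc : ∀ (B : Matrix (Fin m) (Fin m) ℝ), f (B.mulVec v) = t ^ k * f (B.mulVec u) := by
          intro B
          rw [← htu, Matrix.mulVec_smul]
          exact hhom t (le_of_lt h0) _
        have hx : S₀.mulVec u ∈ Metric.closedBall (0 : Fin m → ℝ) ((m : ℝ) * M₁) := by
          rw [Metric.mem_closedBall, dist_zero_right]
          calc ‖S₀.mulVec u‖ ≤ (m : ℝ) * ‖toE S₀‖ * ‖u‖ := mulVec_norm_le _ _
            _ = (m : ℝ) * ‖toE S₀‖ := by rw [hunorm, mul_one]
            _ ≤ (m : ℝ) * M₁ := mul_le_mul_of_nonneg_left hS₀bound (Nat.cast_nonneg m)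
        have hdistz : dist (S.mulVec u) (S₀.mulVec u) ≤ (m : ℝ) * (Δ / μ₀) := by
          rw [dist_eq_norm, ← Matrix.sub_mulVec]
          calc ‖(S - S₀).mulVec u‖ ≤ (m : ℝ) * ‖toE (S - S₀)‖ * ‖u‖ := mulVec_norm_le _ _
            _ = (m : ℝ) * ‖toE (S₀ - S)‖ := by
                rw [hunorm, mul_one, toE_sub, toE_sub, norm_sub_rev]
            _ ≤ (m : ℝ) * (Δ / μ₀) := by
                apply mul_le_mul_of_nonneg_left _ (Nat.cast_nonneg m)
                rw [le_div_iff₀ hμ₀, mul_comm]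
                exact hkey
        have hdistδ : dist (S.mulVec u) (S₀.mulVec u) ≤ δ := by
          refine le_trans hdistz ?_
          have h3 : Δ * ((m : ℝ) + 1) ≤ δ * μ₀ := by
            rw [← le_div_iff₀ (by positivity : (0:ℝ) < (m : ℝ) + 1)]
            rw [hε₀def] at hsmall
            exact hsmall
          have h4 : (m : ℝ) * (Δ / μ₀) = ((m : ℝ) * Δ) / μ₀ := by ring
          rw [h4, div_le_iff₀ hμ₀]
          nlinarith [hΔnn]
        have hflip :
            dist (f (S₀.mulVec u)) (f (S.mulVec u)) ≤ K * dist (S₀.mulVec u) (S.mulVec u) :=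
          hlipK (S₀.mulVec u) hx (S₀.mulVec u) (S.mulVec u)
            (by rw [dist_self]; exact hδ.le) hdistδ
        have hfull : |f (S₀.mulVec u) - f (S.mulVec u)| ≤ K * ((m : ℝ) * (Δ / μ₀)) := by
          rw [← Real.dist_eq]
          refine le_trans hflip (mul_le_mul_of_nonneg_left ?_ hK)
          rw [dist_comm]
          exact hdistz
        calc |f (S₀.mulVec v) - f (S.mulVec v)|
            = t ^ k * |f (S₀.mulVec u) - f (S.mulVec u)| := by
              rw [hsc S₀, hsc S, ← mul_sub, abs_mul, abs_pow, abs_of_pos h0]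
          _ ≤ t ^ k * (K * ((m : ℝ) * (Δ / μ₀))) :=
              mul_le_mul_of_nonneg_left hfull (pow_nonneg (le_of_lt h0) k)
          _ = (K * (m : ℝ) / μ₀ * Δ) * t ^ k := by ring
    have hcoeff : K * (m : ℝ) / μ₀ * Ik * Real.sqrt ε₀ ≤ C := by
      rw [hCdef]; linarith
    calc |(∫ v, f (S₀.mulVec v) ∂γ) - ∫ v, f (S.mulVec v) ∂γ|
        = |∫ v, (f (S₀.mulVec v) - f (S.mulVec v)) ∂γ| := by rw [integral_sub hint₀ hintA]
      _ ≤ ∫ v, |f (S₀.mulVec v) - f (S.mulVec v)| ∂γ := by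
          rw [← Real.norm_eq_abs]
          exact le_of_le_of_eq (norm_integral_le_integral_norm _)
            (integral_congr_ae (Filter.Eventually.of_forall fun v => Real.norm_eq_abs _))
      _ ≤ ∫ v, (K * (m : ℝ) / μ₀ * Δ) * ‖v‖ ^ k ∂γ :=
          integral_mono (hint₀.sub hintA).abs
            ((integrable_norm_pow m k).const_mul _) (fun v => hpt v)
      _ = (K * (m : ℝ) / μ₀ * Δ) * Ik := integral_const_mul _ _
      _ = (K * (m : ℝ) / μ₀ * Ik) * Δ := by ring
      _ ≤ (K * (m : ℝ) / μ₀ * Ik) * (Real.sqrt ε₀ * Real.sqrt Δ) := by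
          refine mul_le_mul_of_nonneg_left ?_
            (mul_nonneg (div_nonneg (mul_nonneg hK (Nat.cast_nonneg m)) hμ₀.le) hIknn)
          calc Δ = Real.sqrt Δ * Real.sqrt Δ := (Real.mul_self_sqrt hΔnn).symm
            _ ≤ Real.sqrt ε₀ * Real.sqrt Δ :=
                mul_le_mul_of_nonneg_right (Real.sqrt_le_sqrt hsmall) (Real.sqrt_nonneg _)
      _ = (K * (m : ℝ) / μ₀ * Ik * Real.sqrt ε₀) * Real.sqrt Δ := by ring
      _ ≤ C * Real.sqrt Δ := mul_le_mul_of_nonneg_right hcoeff (Real.sqrt_nonneg _)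
  · -- far regime
    have hbig : ε₀ ≤ Δ := le_of_lt (lt_of_not_ge hsmall)
    have hsqrtε : 0 < Real.sqrt ε₀ := Real.sqrt_pos.mpr hε₀pos
    have h1 : |(∫ v, f (S₀.mulVec v) ∂γ) - ∫ v, f (S.mulVec v) ∂γ| ≤ C₁ := by
      calc |(∫ v, f (S₀.mulVec v) ∂γ) - ∫ v, f (S.mulVec v) ∂γ|
          ≤ |∫ v, f (S₀.mulVec v) ∂γ| + |∫ v, f (S.mulVec v) ∂γ| := by
            rw [sub_eq_add_neg]
            refine le_trans (abs_add_le _ _) ?_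
            rw [abs_neg]
        _ ≤ C₁ := by
            have hb1 := hptbound S₀ hS₀bound
            have hb2 := hptbound S hSbound
            rw [hC₁def]
            linarith
    have h2 : C₁ ≤ (C₁ / Real.sqrt ε₀) * Real.sqrt Δ := by
      have h3 : Real.sqrt ε₀ ≤ Real.sqrt Δ := Real.sqrt_le_sqrt hbig
      calc C₁ = (C₁ / Real.sqrt ε₀) * Real.sqrt ε₀ := by
            rw [div_mul_cancel₀ _ (ne_of_gt hsqrtε)]
        _ ≤ (C₁ / Real.sqrt ε₀) * Real.sqrt Δ := mul_le_mul_of_nonneg_left h3 ht2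
    refine le_trans h1 (le_trans h2 ?_)
    refine mul_le_mul_of_nonneg_right ?_ (Real.sqrt_nonneg _)
    rw [hCdef]
    linarith
end
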